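/- Let T be a tree with at least one edge. The unique minimum monitoring edge-geodetic set of T is exactly the set of leaves of T, so meg(T) equals the number of leaves of T. -/

import Mathlib

open SimpleGraph

variable {V : Type*}

/-- A pair of vertices `u, v` monitors edge `e` in `G` if `u` and `v` are connected
and `e` lies on every shortest path (walk of length `G.dist u v`) between them. -/
def monitors (G : SimpleGraph V) (u v : V) (e : Sym2 V) : Prop :=
  G.Reachable u v ∧ ∀ p : G.Walk u v, p.length = G.dist u v → e ∈ p.edges

/-- `M` is a monitoring edge-geodetic set of `G`. -/
def IsMEGSet (G : SimpleGraph V) (M : Set V) : Prop :=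
  ∀ e ∈ G.edgeSet, ∃ u ∈ M, ∃ v ∈ M, monitors G u v e

/-- The monitoring edge-geodetic number: minimum size of an MEG-set. -/
noncomputable def meg (G : SimpleGraph V) : ℕ :=
  sInf {n | ∃ M : Finset V, IsMEGSet G ↑M ∧ M.card = n}

section Aux

set_option linter.unusedSectionVars false

variable [DecidableEq V] {G : SimpleGraph V}

private lemma dist_add_dist_le_length {u v x : V} (p : G.Walk u v) (hx : x ∈ p.support) :
    G.dist u x + G.dist x v ≤ p.length := by
  calc G.dist u x + G.dist x v
      ≤ (p.takeUntil x hx).length + (p.dropUntil x hx).length :=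
        Nat.add_le_add (dist_le _) (dist_le _)
    _ = p.length := by rw [← Walk.length_append, p.take_spec hx]

private lemma adj_dist_eq_one {u v : V} (h : G.Adj u v) : G.dist u v = 1 :=
  dist_eq_one_iff_adj.mpr h

private lemma tree_parity (hT : G.IsTree) {u w : V} (h : G.Adj u w) (a : V) :
    G.dist u a ≠ G.dist w a := by
  intro he
  obtain ⟨P, hPp, hPl⟩ := (hT.isConnected.preconnected u a).exists_path_of_dist
  obtain ⟨Q, hQp, hQl⟩ := (hT.isConnected.preconnected w a).exists_path_of_dist
  have huQ : u ∉ Q.support := by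
    intro hu
    have h1 := dist_add_dist_le_length Q hu
    have h2 := adj_dist_eq_one h.symm
    omega
  have hR : (Walk.cons h Q).IsPath := hQp.cons huQ
  have heq := hT.IsAcyclic.path_unique ⟨P, hPp⟩ ⟨Walk.cons h Q, hR⟩
  have := congrArg (fun q : G.Path u a => q.1.length) heq
  simp only [Walk.length_cons] at this
  omega

private lemma down_unique (hT : G.IsTree) {u w1 w2 a : V} (h1 : G.Adj u w1) (h2 : G.Adj u w2)
    (hd1 : G.dist w1 a + 1 = G.dist u a) (hd2 : G.dist w2 a + 1 = G.dist u a) : w1 = w2 := by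
  obtain ⟨P1, hP1p, hP1l⟩ := (hT.isConnected.preconnected w1 a).exists_path_of_dist
  obtain ⟨P2, hP2p, hP2l⟩ := (hT.isConnected.preconnected w2 a).exists_path_of_dist
  have hu1 : u ∉ P1.support := by
    intro hu
    have hb := dist_add_dist_le_length P1 hu
    have hc := adj_dist_eq_one h1.symm
    omega
  have hu2 : u ∉ P2.support := by
    intro hu
    have hb := dist_add_dist_le_length P2 hu
    have hc := adj_dist_eq_one h2.symm
    omega
  have heq := hT.IsAcyclic.path_unique ⟨Walk.cons h1 P1, hP1p.cons hu1⟩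
    ⟨Walk.cons h2 P2, hP2p.cons hu2⟩
  have hs := congrArg (fun q : G.Path u a => q.1.support) heq
  simp only [Walk.support_cons] at hs
  have hs' : P1.support = P2.support := List.cons_injective.eq_iff.mp hs
  have e1 := P1.support_eq_cons
  have e2 := P2.support_eq_cons
  rw [e1, e2] at hs'
  exact (List.cons_eq_cons.mp hs').1

private lemma neighbor_class (hT : G.IsTree) {u w a : V} (hw : G.Adj u w) :
    G.dist w a = G.dist u a + 1 ∨ G.dist w a + 1 = G.dist u a := by
  have h1 : G.dist w a ≤ G.dist w u + G.dist u a := hT.isConnected.dist_triangle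
  have h2 : G.dist u a ≤ G.dist u w + G.dist w a := hT.isConnected.dist_triangle
  have h3 := tree_parity hT hw a
  have h4 := adj_dist_eq_one hw
  have h5 := adj_dist_eq_one hw.symm
  omega

private lemma exists_leaf [Fintype V] [DecidableRel G.Adj] (hT : G.IsTree) {a b : V}
    (hab : G.Adj a b) : ∃ u, G.degree u = 1 ∧ G.dist u b = G.dist u a + 1 := by
  have hreach := hT.isConnected.preconnected
  set S := Finset.univ.filter (fun x => G.dist x b = G.dist x a + 1) with hS
  have haS : a ∈ S := by simp [hS, adj_dist_eq_one hab]
  obtain ⟨u, huS, hmax⟩ := S.exists_max_image (fun x => G.dist x a) ⟨a, haS⟩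
  have hu : G.dist u b = G.dist u a + 1 := by
    simpa [hS] using huS
  refine ⟨u, ?_, hu⟩
  have hub : u ≠ b := by
    intro h; rw [h, dist_self] at hu; omega
  have hdeg1 : 0 < G.degree u := by
    rw [degree_pos_iff_exists_adj]
    obtain ⟨p⟩ := hreach u b
    obtain ⟨w, hw, -, -⟩ := Walk.exists_eq_cons_of_ne hub p
    exact ⟨w, hw⟩
  by_contra hne1
  have hdeg2 : 1 < G.degree u := by omega
  rw [degree, Finset.one_lt_card_iff] at hdeg2
  obtain ⟨w1, w2, hw1, hw2, hw12⟩ := hdeg2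
  rw [mem_neighborFinset] at hw1 hw2
  obtain ⟨w, hw, hwup, hwb⟩ :
      ∃ w, G.Adj u w ∧ G.dist w a = G.dist u a + 1 ∧ w ≠ b := by
    have hba := adj_dist_eq_one hab.symm
    rcases neighbor_class hT (a := a) hw1 with hc1 | hc1
    · by_cases hb : w1 = b
      · rcases neighbor_class hT (a := a) hw2 with hc2 | hc2
        · refine ⟨w2, hw2, hc2, ?_⟩
          intro h; exact hw12 (hb.trans h.symm)
        · subst hb; omega
      · exact ⟨w1, hw1, hc1, hb⟩
    · rcases neighbor_class hT (a := a) hw2 with hc2 | hc2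
      · refine ⟨w2, hw2, hc2, ?_⟩
        intro h; subst h; omega
      · exact absurd (down_unique hT hw1 hw2 hc1 hc2) hw12
  have hwS : G.dist w b = G.dist w a + 1 := by
    have h1 : G.dist w b ≤ G.dist w u + G.dist u b := hT.isConnected.dist_triangle
    have h2 : G.dist u b ≤ G.dist u w + G.dist w b := hT.isConnected.dist_triangle
    have h3 := tree_parity hT hw b
    have h4 := adj_dist_eq_one hw
    have h5 := adj_dist_eq_one hw.symm
    rcases Nat.lt_or_ge (G.dist w b) (G.dist u a + 2) with hlt | hge
    · exfalso
      have hwb' : G.dist w b = G.dist u a := by omega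
      obtain ⟨P, hPp, hPl⟩ := (hreach u a).exists_path_of_dist
      have hwP : w ∉ P.support := by
        intro hm
        have := dist_add_dist_le_length P hm
        omega
      obtain ⟨Q, hQp, hQl⟩ := (hreach w b).exists_path_of_dist
      have haQ : a ∉ Q.reverse.support := by
        rw [Walk.support_reverse, List.mem_reverse]
        intro hm
        have := dist_add_dist_le_length Q hm
        have := adj_dist_eq_one hab
        omega
      have heq := hT.IsAcyclic.path_unique
        ⟨Walk.cons hw.symm P, hPp.cons hwP⟩
        ⟨(Walk.cons hab Q.reverse).reverse,
          ((hQp.reverse.cons haQ).reverse)⟩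
      have hsup := congrArg (fun q : G.Path w a => q.1.support) heq
      simp only [Walk.support_cons, Walk.support_reverse] at hsup
      have hbmem : b ∈ w :: P.support := by
        rw [hsup, List.mem_reverse, List.mem_cons]
        right
        rw [List.mem_reverse]
        exact Q.end_mem_support
      rcases List.mem_cons.mp hbmem with h | h
      · exact hwb h.symm
      · have := dist_add_dist_le_length P h
        have := adj_dist_eq_one hab.symm
        omega
    · omega
  have hmem : w ∈ S := by simp [hS, hwS]
  have := hmax w hmem
  omega

private lemma edge_in_all_walks (hT : G.IsTree) {a b u v : V} (hab : G.Adj a b)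
    (hu : G.dist u b = G.dist u a + 1) (hv : G.dist v a = G.dist v b + 1)
    (p : G.Walk u v) : s(a, b) ∈ p.edges := by
  by_contra he
  have hbridge : ¬ (G \ fromEdgeSet {s(a, b)}).Reachable a b :=
    (isBridge_iff.mp ((isAcyclic_iff_forall_adj_isBridge.mp hT.IsAcyclic) hab))
  apply hbridge
  have hreach := hT.isConnected.preconnected
  have h1 : (G.deleteEdges {s(a, b)}).Reachable u a := by
    obtain ⟨P, hPp, hPl⟩ := (hreach u a).exists_path_of_dist
    refine ⟨P.toDeleteEdges _ ?_⟩
    intro e heP heq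
    rw [Set.mem_singleton_iff] at heq
    subst heq
    have hbP : b ∈ P.support := P.snd_mem_support_of_mem_edges heP
    have := dist_add_dist_le_length P hbP
    have := adj_dist_eq_one hab.symm
    omega
  have h2 : (G.deleteEdges {s(a, b)}).Reachable v b := by
    obtain ⟨P, hPp, hPl⟩ := (hreach v b).exists_path_of_dist
    refine ⟨P.toDeleteEdges _ ?_⟩
    intro e heP heq
    rw [Set.mem_singleton_iff] at heq
    subst heq
    have haP : a ∈ P.support := P.fst_mem_support_of_mem_edges heP
    have := dist_add_dist_le_length P haP
    have := adj_dist_eq_one hab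
    omega
  have h3 : (G.deleteEdges {s(a, b)}).Reachable u v := by
    refine ⟨p.toDeleteEdges _ ?_⟩
    intro e heP heq
    rw [Set.mem_singleton_iff] at heq
    exact he (heq ▸ heP)
  exact h1.symm.trans (h3.trans h2)

private lemma leaf_mem_of_isMEGSet [Fintype V] [DecidableRel G.Adj] {M : Set V}
    (hM : IsMEGSet G M) {x : V} (hx : G.degree x = 1) : x ∈ M := by
  obtain ⟨y, hy⟩ := Finset.card_eq_one.mp hx
  have hxy : G.Adj x y := by
    rw [← mem_neighborFinset, hy]; exact Finset.mem_singleton_self y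
  obtain ⟨u, huM, v, hvM, hrea, hmon⟩ := hM s(x, y) hxy
  by_cases hux : u = x
  · exact hux ▸ huM
  by_cases hvx : v = x
  · exact hvx ▸ hvM
  exfalso
  obtain ⟨p, hpp, hpl⟩ := hrea.exists_path_of_dist
  have he := hmon p hpl
  have hxp : x ∈ p.support := p.fst_mem_support_of_mem_edges he
  have hspec := p.take_spec hxp
  set q := p.takeUntil x hxp with hq
  set r := p.dropUntil x hxp with hr
  obtain ⟨n2, hn2, r', hr'⟩ := Walk.exists_eq_cons_of_ne (Ne.symm hvx) r
  obtain ⟨n1, hn1, q', hq'⟩ := Walk.exists_eq_cons_of_ne (Ne.symm hux) q.reverse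
  have hyn1 : n1 = y := by
    have h' : n1 ∈ G.neighborFinset x := (mem_neighborFinset _ _ _).mpr hn1
    rw [hy] at h'; exact Finset.mem_singleton.mp h'
  have hyn2 : n2 = y := by
    have h' : n2 ∈ G.neighborFinset x := (mem_neighborFinset _ _ _).mpr hn2
    rw [hy] at h'; exact Finset.mem_singleton.mp h'
  have e1 : s(x, n1) ∈ q.edges := by
    rw [← List.mem_reverse, ← Walk.edges_reverse, hq', Walk.edges_cons]
    exact List.mem_cons_self
  have e2 : s(x, n2) ∈ r.edges := by
    rw [hr', Walk.edges_cons]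
    exact List.mem_cons_self
  have hnd : (q.edges ++ r.edges).Nodup := by
    rw [← Walk.edges_append, hspec]
    exact hpp.isTrail.edges_nodup
  rw [hyn1] at e1
  rw [hyn2] at e2
  exact ((List.nodup_append'.mp hnd).2.2) e1 e2

end Aux

/-- For a tree with at least one edge, the set of leaves is the unique minimum
MEG-set, and `meg` equals the number of leaves. -/
theorem tree_meg_eq_leaves [Fintype V] [DecidableEq V] (G : SimpleGraph V)
    [DecidableRel G.Adj] (hT : G.IsTree) (hne : G.edgeSet.Nonempty) :
    meg G = (Finset.univ.filter (fun v => G.degree v = 1)).card ∧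
    IsMEGSet G ↑(Finset.univ.filter (fun v => G.degree v = 1)) ∧
    ∀ M : Finset V, IsMEGSet G ↑M → M.card = meg G →
      M = Finset.univ.filter (fun v => G.degree v = 1) := by
  set L := Finset.univ.filter (fun v => G.degree v = 1) with hL
  have hLmeg : IsMEGSet G ↑L := by
    intro e he
    revert he
    refine Sym2.ind (fun a b => ?_) e
    intro he
    rw [mem_edgeSet] at he
    obtain ⟨u, hu1, hu2⟩ := exists_leaf hT he
    obtain ⟨v, hv1, hv2⟩ := exists_leaf hT he.symm
    exact ⟨u, by simp [hL, hu1], v, by simp [hL, hv1], hT.isConnected.preconnected u v,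
      fun p _ => edge_in_all_walks hT he hu2 hv2 p⟩
  have hsub : ∀ M : Finset V, IsMEGSet G ↑M → L ⊆ M := by
    intro M hM x hx
    rw [hL, Finset.mem_filter] at hx
    exact leaf_mem_of_isMEGSet hM hx.2
  have hmem : L.card ∈ {n | ∃ M : Finset V, IsMEGSet G ↑M ∧ M.card = n} := ⟨L, hLmeg, rfl⟩
  have hmegeq : meg G = L.card := by
    apply le_antisymm (Nat.sInf_le hmem)
    apply le_csInf ⟨_, hmem⟩
    rintro n ⟨M, hM, rfl⟩
    exact Finset.card_le_card (hsub M hM)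
  exact ⟨hmegeq, hLmeg, fun M hM hcard =>
    (Finset.eq_of_subset_of_card_le (hsub M hM) (by rw [hcard, hmegeq])).symm⟩
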